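/- (Optimality of VeriX) Let B be the final irrelevant set produced by the VeriX procedure and A = Fin d \ B the returned explanation. Then for every index i ∈ A, the set B ∪ {i} is NOT irrelevant; i.e., there exists an input x' with |x' j − x j| ≤ ε for all j ∈ B ∪ {i} and x' j = x j for all j ∉ B ∪ {i} such that |f x' − f x| > δ. -/

import Mathlib

def Irrelevant {d : ℕ} (f : (Fin d → ℝ) → ℝ) (x : Fin d → ℝ) (ε δ : ℝ)
    (B : Set (Fin d)) : Prop :=
  ∀ x' : Fin d → ℝ, (∀ i ∈ B, |x' i - x i| ≤ ε) → (∀ i ∉ B, x' i = x i) →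
    |f x' - f x| ≤ δ

def RobustExpl {d : ℕ} (f : (Fin d → ℝ) → ℝ) (x : Fin d → ℝ) (ε δ : ℝ)
    (A : Set (Fin d)) : Prop :=
  ∀ x' : Fin d → ℝ, (∀ i ∈ A, x' i = x i) → (∀ i ∉ A, |x' i - x i| ≤ ε) →
    |f x' - f x| ≤ δ

open scoped Classical in
noncomputable def verixB {d : ℕ} (f : (Fin d → ℝ) → ℝ) (x : Fin d → ℝ) (ε δ : ℝ)
    (π : List (Fin d)) : Finset (Fin d) :=
  π.foldl (fun B i => if Irrelevant f x ε δ ↑(insert i B) then insert i B else B) ∅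

lemma irrel_mono {d : ℕ} (f : (Fin d → ℝ) → ℝ) (x : Fin d → ℝ) (ε δ : ℝ)
    (hε : 0 ≤ ε) {B B' : Set (Fin d)} (hBB : B ⊆ B')
    (h : Irrelevant f x ε δ B') : Irrelevant f x ε δ B := by
  intro x' h1 h2
  apply h x'
  · intro i hi
    by_cases hiB : i ∈ B
    · exact h1 i hiB
    · rw [h2 i hiB]; simpa using hε
  · intro i hi
    exact h2 i (fun hB => hi (hBB hB))

open scoped Classical in
lemma foldl_mono {d : ℕ} (f : (Fin d → ℝ) → ℝ) (x : Fin d → ℝ) (ε δ : ℝ)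
    (l : List (Fin d)) (B : Finset (Fin d)) :
    B ⊆ l.foldl (fun (B : Finset (Fin d)) i => if Irrelevant f x ε δ ↑(insert i B) then insert i B else B) B := by
  induction l generalizing B with
  | nil => simp
  | cons a l ih =>
    simp only [List.foldl_cons]
    refine subset_trans ?_ (ih _)
    split <;> simp [Finset.subset_insert]

open scoped Classical in
lemma foldl_fail {d : ℕ} (f : (Fin d → ℝ) → ℝ) (x : Fin d → ℝ) (ε δ : ℝ)
    (hε : 0 ≤ ε) (l : List (Fin d)) (B : Finset (Fin d)) (i : Fin d)
    (hil : i ∈ l)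
    (hni : i ∉ l.foldl (fun (B : Finset (Fin d)) i => if Irrelevant f x ε δ ↑(insert i B) then insert i B else B) B) :
    ¬ Irrelevant f x ε δ
      ↑(insert i (l.foldl (fun (B : Finset (Fin d)) i => if Irrelevant f x ε δ ↑(insert i B) then insert i B else B) B)) := by
  induction l generalizing B with
  | nil => simp at hil
  | cons a l ih =>
    simp only [List.foldl_cons] at hni ⊢
    rcases List.mem_cons.mp hil with rfl | hil'
    · -- i = a : test must have failed at this step
      by_cases htest : Irrelevant f x ε δ ↑(insert i B)
      · exfalso
        apply hni
        rw [if_pos htest]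
        exact foldl_mono f x ε δ l _ (Finset.mem_insert_self i B)
      · rw [if_neg htest] at hni ⊢
        intro hcontra
        apply htest
        exact irrel_mono f x ε δ hε
          (Finset.coe_subset.mpr (Finset.insert_subset_insert i (foldl_mono f x ε δ l B))) hcontra
    · exact ih _ hil' hni

theorem stmt7 {d : ℕ} (f : (Fin d → ℝ) → ℝ) (x : Fin d → ℝ) (ε δ : ℝ)
    (hε : 0 ≤ ε) (hδ : 0 ≤ δ) (π : List (Fin d)) (hnodup : π.Nodup)
    (hall : ∀ i : Fin d, i ∈ π) :
    ∀ i ∈ Finset.univ \ verixB f x ε δ π,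
      ∃ x' : Fin d → ℝ,
        (∀ j ∈ insert i (verixB f x ε δ π), |x' j - x j| ≤ ε) ∧
        (∀ j ∉ insert i (verixB f x ε δ π), x' j = x j) ∧
        δ < |f x' - f x| := by
  intro i hi
  rw [Finset.mem_sdiff] at hi
  have hfail := foldl_fail f x ε δ hε π ∅ i (hall i) hi.2
  rw [Irrelevant] at hfail
  push_neg at hfail
  obtain ⟨x', h1, h2, h3⟩ := hfail
  exact ⟨x', fun j hj => h1 j (by simpa [verixB] using hj), fun j hj => h2 j (by simpa [verixB] using hj), h3⟩
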